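/- Let λ₁, λ₂ > 0, ℓ₀ ≥ 1, σ₀, σ₁ ∈ ℝ with σ₀² + σ₁² > 0, and set c₁ = λ₁ℓ₀/(σ₀² + σ₁²) and c₂ = c₁ e^{-c₁ℓ₀}. Define f(r) = 1 - e^{-c₁ r} + c₂ r and ψ(r) = (1/2) f'(r)·((λ₁+λ₂)·1_{r ≤ ℓ₀} - λ₂)·r + 2(σ₀² + σ₁²) f''(r). Then for all r ∈ [0, ℓ₀], ψ(r) ≤ -c₁² e^{-c₁ℓ₀}(σ₀² + σ₁²) ≤ -(c₁c₂(σ₀² + σ₁²)/(1 - e^{-c₁ℓ₀} + c₂ℓ₀))·f(r). -/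
import Mathlib


theorem psi_bound_small_r (lam₁ lam₂ ℓ₀ σ₀ σ₁ c₁ c₂ : ℝ)
    (hlam₁ : 0 < lam₁) (hlam₂ : 0 < lam₂) (hℓ₀ : 1 ≤ ℓ₀) (hσ : 0 < σ₀ ^ 2 + σ₁ ^ 2)
    (hc₁ : c₁ = lam₁ * ℓ₀ / (σ₀ ^ 2 + σ₁ ^ 2)) (hc₂ : c₂ = c₁ * Real.exp (-(c₁ * ℓ₀))) :
    ∀ r : ℝ, 0 ≤ r → r ≤ ℓ₀ →
      (1 / 2) * (c₁ * Real.exp (-(c₁ * r)) + c₂) *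
            ((lam₁ + lam₂) * (if r ≤ ℓ₀ then (1 : ℝ) else 0) - lam₂) * r
          + 2 * (σ₀ ^ 2 + σ₁ ^ 2) * (-(c₁ ^ 2 * Real.exp (-(c₁ * r))))
        ≤ -(c₁ ^ 2 * Real.exp (-(c₁ * ℓ₀)) * (σ₀ ^ 2 + σ₁ ^ 2)) ∧
      -(c₁ ^ 2 * Real.exp (-(c₁ * ℓ₀)) * (σ₀ ^ 2 + σ₁ ^ 2))
        ≤ -(c₁ * c₂ * (σ₀ ^ 2 + σ₁ ^ 2) / (1 - Real.exp (-(c₁ * ℓ₀)) + c₂ * ℓ₀)) *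
            (1 - Real.exp (-(c₁ * r)) + c₂ * r) := by
  intro r hr0 hrℓ
  have hℓpos : (0:ℝ) < ℓ₀ := lt_of_lt_of_le one_pos hℓ₀
  have hSpos : (0:ℝ) < σ₀ ^ 2 + σ₁ ^ 2 := hσ
  have hc₁pos : 0 < c₁ := by rw [hc₁]; positivity
  set Er := Real.exp (-(c₁ * r)) with hEr
  set El := Real.exp (-(c₁ * ℓ₀)) with hEl
  have hErpos : 0 < Er := Real.exp_pos _
  have hElpos : 0 < El := Real.exp_pos _
  have hle : El ≤ Er := by
    apply Real.exp_le_exp.mpr; nlinarith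
  have hEl1 : El < 1 := by
    rw [hEl, Real.exp_lt_one_iff]; nlinarith
  have hEr1 : Er ≤ 1 := by
    rw [hEr, Real.exp_le_one_iff]; nlinarith
  have hc₂pos : 0 < c₂ := by rw [hc₂]; positivity
  have key : c₁ * (σ₀ ^ 2 + σ₁ ^ 2) = lam₁ * ℓ₀ := by
    rw [hc₁]; field_simp
  constructor
  · rw [if_pos hrℓ]
    have h1 : (0:ℝ) ≤ (ℓ₀ - r) * (lam₁ * c₁ * Er) := by
      apply mul_nonneg (by linarith) (by positivity)
    have h2 : (0:ℝ) ≤ (ℓ₀ - r) * (lam₁ * c₁ * El) := by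
      apply mul_nonneg (by linarith) (by positivity)
    have h3 : (0:ℝ) ≤ (Er - El) * (lam₁ * ℓ₀ * c₁) := by
      apply mul_nonneg (by linarith) (by positivity)
    have h4 : (0:ℝ) ≤ (Er - El) * (lam₁ * c₁) := by
      apply mul_nonneg (by linarith) (by positivity)
    have k1 : c₁ ^ 2 * (σ₀ ^ 2 + σ₁ ^ 2) * Er = lam₁ * ℓ₀ * c₁ * Er := by
      linear_combination c₁ * Er * key
    have k2 : c₁ ^ 2 * (σ₀ ^ 2 + σ₁ ^ 2) * El = lam₁ * ℓ₀ * c₁ * El := by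
      linear_combination c₁ * El * key
    rw [hc₂]
    nlinarith [h1, h2, h3, h4, k1, k2, mul_nonneg (mul_nonneg hℓpos.le (sub_nonneg.mpr hle)) (mul_pos hlam₁ hc₁pos).le]
  · set S := σ₀ ^ 2 + σ₁ ^ 2
    have hKeq : c₁ ^ 2 * El * S = c₁ * c₂ * S := by rw [hc₂]; ring
    have hDpos : 0 < 1 - El + c₂ * ℓ₀ := by nlinarith
    have hfle : 1 - Er + c₂ * r ≤ 1 - El + c₂ * ℓ₀ := by nlinarith
    have hKpos : 0 < c₁ * c₂ * S := by positivity
    have hmain : c₁ * c₂ * S / (1 - El + c₂ * ℓ₀) * (1 - Er + c₂ * r) ≤ c₁ * c₂ * S := by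
      rw [div_mul_eq_mul_div, div_le_iff₀ hDpos]
      nlinarith [mul_le_mul_of_nonneg_left hfle (le_of_lt hKpos)]
    rw [hKeq]
    linarith
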